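/- For every integer k ≥ 1, d_k = c_k − (1/2)·Σ_{k_1+k_2=k−1} c_{k_1}·c_{k_2}, where the sum is over ordered pairs of nonnegative integers (k_1,k_2) with k_1 + k_2 = k−1. Equivalently, (k+1)^{k−2}/k! = (k+1)^{k−1}/k! − (1/2)·Σ_{k_1+k_2=k−1} ((k_1+1)^{k_1−1}/k_1!)·((k_2+1)^{k_2−1}/k_2!). -/

import Mathlib

open Polynomial Finset

/-- `c_k = (k+1)^{k-1}/k!` (with an integer exponent, so that `c₀ = 1`). -/
noncomputable def ck (k : ℕ) : ℚ := ((k : ℚ) + 1) ^ ((k : ℤ) - 1) / (k.factorial : ℚ)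

/-- `d_k = (k+1)^{k-2}/k!` (with an integer exponent, so that `d₀ = 1`, `d₁ = 1/2`). -/
noncomputable def dk (k : ℕ) : ℚ := ((k : ℚ) + 1) ^ ((k : ℤ) - 2) / (k.factorial : ℚ)

/-- Abel polynomial `p_n(X) = X (X+n)^{n-1}` (with `p_0 = 1`). -/
noncomputable def pAbel : ℕ → ℚ[X]
  | 0 => 1
  | (n+1) => X * (X + ((n : ℚ[X]) + 1)) ^ n

lemma pAbel_deriv (n : ℕ) :
    derivative (pAbel (n+1)) = ((n : ℚ[X]) + 1) * (pAbel n).comp (X + 1) := by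
  cases n with
  | zero => simp [pAbel]
  | succ m =>
    simp only [pAbel, mul_comp, pow_comp, add_comp, natCast_comp, X_comp, one_comp,
      derivative_mul, derivative_pow, derivative_X, derivative_add, derivative_natCast,
      derivative_one, add_zero, C_add, C_1, Polynomial.C_eq_natCast, map_natCast]
    push_cast
    ring

lemma pAbel_eval_zero (n : ℕ) : (pAbel n).eval 0 = if n = 0 then 1 else 0 := by
  cases n <;> simp [pAbel]

lemma poly_ext (f g : ℚ[X]) (h1 : derivative f = derivative g) (h0 : f.eval 0 = g.eval 0) :
    f = g := by
  have hd : derivative (f - g) = 0 := by rw [derivative_sub, h1, sub_self]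
  have h2 := Polynomial.natDegree_eq_zero_of_derivative_eq_zero hd
  have h3 := Polynomial.eq_C_of_natDegree_eq_zero h2
  have h4 : (f - g).coeff 0 = 0 := by
    have h5 := congrArg (Polynomial.eval 0) h3
    simpa [h0] using h5.symm
  rw [h4, map_zero] at h3
  exact sub_eq_zero.mp h3

lemma pAbel_zero : pAbel 0 = 1 := rfl

lemma comp_sum (s : Finset ℕ) (f : ℕ → ℚ[X]) (q : ℚ[X]) :
    (∑ i ∈ s, f i).comp q = ∑ i ∈ s, (f i).comp q := by
  simp [Polynomial.comp, Polynomial.eval₂_finset_sum]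

lemma abel_poly (n : ℕ) :
    ∑ k ∈ Finset.range (n+1), (n.choose k : ℚ[X]) * pAbel k * C ((pAbel (n-k)).eval 1)
      = (pAbel n).comp (X + 1) := by
  induction n with
  | zero => simp [pAbel]
  | succ n ih =>
    apply poly_ext
    · -- derivatives agree
      rw [derivative_comp]
      simp only [derivative_add, derivative_X, derivative_one, add_zero, mul_one]
      rw [pAbel_deriv]
      have hL : derivative (∑ k ∈ Finset.range (n+2),
            ((n+1).choose k : ℚ[X]) * pAbel k * C ((pAbel (n+1-k)).eval 1))
          = ∑ k ∈ Finset.range (n+2),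
            ((n+1).choose k : ℚ[X]) * derivative (pAbel k) * C ((pAbel (n+1-k)).eval 1) := by
        rw [derivative_sum]
        refine Finset.sum_congr rfl fun k _ => ?_
        rw [derivative_mul, derivative_mul, derivative_natCast, derivative_C]
        ring
      rw [hL, Finset.sum_range_succ']
      simp only [pAbel_zero, derivative_one, mul_zero, zero_mul, add_zero]
      have hterm : ∀ j ∈ Finset.range (n+1),
          ((n+1).choose (j+1) : ℚ[X]) * derivative (pAbel (j+1)) * C ((pAbel (n+1-(j+1))).eval 1)
          = ((n : ℚ[X]) + 1) * (((n.choose j : ℚ[X]) * pAbel j * C ((pAbel (n-j)).eval 1)).comp (X+1)) := by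
        intro j hj
        rw [pAbel_deriv]
        have hc : ((n+1).choose (j+1) : ℚ[X]) * ((j : ℚ[X]) + 1)
            = ((n : ℚ[X]) + 1) * (n.choose j : ℚ[X]) := by
          have h' := Nat.add_one_mul_choose_eq n j
          have h'' : (((n+1) * n.choose j : ℕ) : ℚ[X]) = (((n+1).choose (j+1) * (j+1) : ℕ) : ℚ[X]) := by
            rw [h']
          push_cast at h''
          linear_combination h''.symm
        simp only [mul_comp, natCast_comp, C_comp]
        have hnj : n + 1 - (j+1) = n - j := by omega
        rw [hnj]
        calc ((n+1).choose (j+1) : ℚ[X]) * (((j:ℚ[X])+1) * (pAbel j).comp (X+1)) * C ((pAbel (n-j)).eval 1)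
            = (((n+1).choose (j+1) : ℚ[X]) * ((j:ℚ[X])+1)) * ((pAbel j).comp (X+1)) * C ((pAbel (n-j)).eval 1) := by ring
          _ = _ := by rw [hc]; ring
      rw [Finset.sum_congr rfl hterm, ← Finset.mul_sum, ← comp_sum, ih, mul_comp]
      simp only [add_comp, natCast_comp, one_comp]
      ring
    · -- values at 0 agree
      rw [eval_comp]
      simp only [eval_finset_sum, eval_mul, eval_natCast, eval_C, eval_add, eval_X, eval_one,
        zero_add]
      rw [Finset.sum_eq_single 0]
      · simp [pAbel_zero]
      · intro k _ hk
        rw [pAbel_eval_zero]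
        simp [hk]
      · intro h
        simp at h

lemma pAbel_eval_one (i : ℕ) : (pAbel i).eval 1 = ck i * i.factorial := by
  cases i with
  | zero => simp [pAbel, ck]
  | succ j =>
    have hfac : ((j+1).factorial : ℚ) ≠ 0 := by exact_mod_cast (j+1).factorial_pos.ne'
    simp only [pAbel, ck, eval_mul, eval_pow, eval_add, eval_X, eval_natCast, eval_one, one_mul]
    rw [div_mul_cancel₀ _ hfac]
    have : ((j+1 : ℕ) : ℤ) - 1 = (j : ℤ) := by push_cast; ring
    rw [this, zpow_natCast]
    push_cast
    ring

lemma pAbel_eval_two (m : ℕ) :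
    ((m:ℚ) + 2) * (pAbel m).eval 2 = 2 * ((m:ℚ) + 2) ^ m := by
  cases m with
  | zero => simp [pAbel]
  | succ j =>
    simp only [pAbel, eval_mul, eval_pow, eval_add, eval_X, eval_natCast, eval_one]
    push_cast
    ring

lemma sum_choose_eval (m : ℕ) :
    ∑ k ∈ Finset.range (m+1), (m.choose k : ℚ) * (pAbel k).eval 1 * (pAbel (m-k)).eval 1
      = (pAbel m).eval 2 := by
  have h := congrArg (Polynomial.eval 1) (abel_poly m)
  simpa [eval_finset_sum, eval_comp, one_add_one_eq_two] using h

lemma conv_sum (m : ℕ) :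
    ∑ p ∈ Finset.HasAntidiagonal.antidiagonal m, ck p.1 * ck p.2 = (pAbel m).eval 2 / m.factorial := by
  have hfm : (m.factorial : ℚ) ≠ 0 := by exact_mod_cast m.factorial_pos.ne'
  rw [Finset.Nat.sum_antidiagonal_eq_sum_range_succ_mk, eq_div_iff hfm, Finset.sum_mul]
  have key : ∀ k ∈ Finset.range (m+1), ck (k, m-k).1 * ck (k, m-k).2 * (m.factorial : ℚ)
      = (m.choose k : ℚ) * (pAbel k).eval 1 * (pAbel (m-k)).eval 1 := by
    intro k hk
    have hk' : k ≤ m := by simp at hk; omega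
    simp only
    rw [pAbel_eval_one, pAbel_eval_one]
    have hfac : ((m.factorial : ℕ) : ℚ)
        = (m.choose k : ℚ) * (k.factorial : ℚ) * ((m-k).factorial : ℚ) := by
      exact_mod_cast (Nat.choose_mul_factorial_mul_factorial hk').symm
    rw [hfac]
    ring
  rw [show Finset.range m.succ = Finset.range (m+1) from rfl, Finset.sum_congr rfl key,
    sum_choose_eval]

theorem dk_eq_ck_minus_convolution (k : ℕ) (hk : 1 ≤ k) :
    dk k = ck k - 1 / 2 * ∑ p ∈ Finset.HasAntidiagonal.antidiagonal (k - 1), ck p.1 * ck p.2 := by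
  obtain ⟨m, rfl⟩ : ∃ m, k = m + 1 := ⟨k - 1, by omega⟩
  rw [show m + 1 - 1 = m from rfl, conv_sum]
  have ha : ((m:ℚ) + 2) ≠ 0 := by positivity
  have hfm : (m.factorial : ℚ) ≠ 0 := by exact_mod_cast m.factorial_pos.ne'
  have hfm1 : ((m+1).factorial : ℚ) ≠ 0 := by exact_mod_cast (m+1).factorial_pos.ne'
  have hE : (pAbel m).eval 2 = 2 * ((m:ℚ) + 2) ^ m / ((m:ℚ) + 2) := by
    rw [eq_div_iff ha]
    linear_combination pAbel_eval_two m
  have hck : ck (m+1) = ((m:ℚ) + 2) ^ m / ((m+1).factorial : ℚ) := by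
    unfold ck
    rw [show (((m+1:ℕ) : ℤ)) - 1 = (m : ℤ) from by push_cast; ring, zpow_natCast]
    push_cast
    rw [show (m:ℚ) + 1 + 1 = (m:ℚ) + 2 from by ring]
  have hdk : dk (m+1) = ((m:ℚ) + 2) ^ m / (((m:ℚ) + 2) * ((m+1).factorial : ℚ)) := by
    unfold dk
    rw [show (((m+1:ℕ) : ℤ)) - 2 = (m : ℤ) - 1 from by push_cast; ring,
      zpow_sub_one₀ (by positivity : (((m+1:ℕ):ℚ) + 1) ≠ 0), zpow_natCast]
    push_cast
    rw [show (m:ℚ) + 1 + 1 = (m:ℚ) + 2 from by ring]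
    field_simp
  have hfac : ((m+1).factorial : ℚ) = ((m:ℚ) + 1) * (m.factorial : ℚ) := by
    rw [Nat.factorial_succ]; push_cast; ring
  rw [hck, hdk, hE, hfac]
  have hm1 : ((m:ℚ) + 1) ≠ 0 := by positivity
  field_simp
  ring
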